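/- Let H be a Hopf algebra over a field k. For a k-vector space V, consider the product space P(V) = ∏_{n≥0} V ⊗ H^{⊗n} and the map σ sending f = (fⁿ)_{n≥0} (with fⁿ ∈ V ⊗ H^{⊗n}) to the family whose n-th component is f^{n+1} viewed in (V ⊗ H^{⊗n}) ⊗ H by splitting off the last tensor factor. Let R⁰(V) be the largest subspace W ⊆ P(V) with σ(W) ⊆ W ⊗ H, and let R(V) be the largest subspace of R⁰(V) on which σ restricts to a partial H-comodule structure. Then the resulting functor R : Vect_k → PMod^H (acting on a linear map φ : V → W by the restriction of ∏ₙ (φ ⊗ H^{⊗n})) is right adjoint to the forgetful functor U : PMod^H → Vect_k, with unit η_M(m) = (ρⁿ(m))_{n≥0} for a partial comodule (M, ρ) and counit given by the projection of R(V) onto its degree-0 component V. -/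

import Mathlib

open TensorProduct CategoryTheory CategoryTheory.Limits

noncomputable section

universe u

section PartialComodules

variable (k : Type u) [Field k] (H : Type u) [Ring H] [HopfAlgebra k H]

/-- Multiply the last two tensor factors using the multiplication of `H`. -/
def mulLast (X : Type u) [AddCommGroup X] [Module k X] :
    ((X ⊗[k] H) ⊗[k] H) →ₗ[k] X ⊗[k] H :=
  (LinearMap.lTensor X (LinearMap.mul' k H)) ∘ₗ (TensorProduct.assoc k X H H).toLinearMap

/-- Comultiply the last tensor factor using the comultiplication of `H`. -/
def comulLast (X : Type u) [AddCommGroup X] [Module k X] :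
    (X ⊗[k] H) →ₗ[k] (X ⊗[k] H) ⊗[k] H :=
  (TensorProduct.assoc k X H H).symm.toLinearMap ∘ₗ LinearMap.lTensor X Coalgebra.comul

/-- Apply the antipode to the last tensor factor. -/
def antLast (X : Type u) [AddCommGroup X] [Module k X] :
    (X ⊗[k] H) →ₗ[k] X ⊗[k] H :=
  LinearMap.lTensor X (HopfAlgebra.antipode (R := k) (A := H))

/-- Apply the counit to the last tensor factor. -/
def counitLast (X : Type u) [AddCommGroup X] [Module k X] :
    (X ⊗[k] H) →ₗ[k] X :=
  (TensorProduct.rid k X).toLinearMap ∘ₗ LinearMap.lTensor X Coalgebra.counit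

/-- `(M, ρ)` is a (right, algebraic) partial `H`-comodule: (PCM1) `ρ` is counital, while
(PCM2) and (PCM3) express the partial coassociativity. -/
structure IsPartialComodule {M : Type u} [AddCommGroup M] [Module k M]
    (ρ : M →ₗ[k] M ⊗[k] H) : Prop where
  counit : counitLast k H M ∘ₗ ρ = LinearMap.id
  pcm2 :
    mulLast k H (M ⊗[k] H) ∘ₗ antLast k H ((M ⊗[k] H) ⊗[k] H) ∘ₗ
        LinearMap.rTensor H (comulLast k H M) ∘ₗ LinearMap.rTensor H ρ ∘ₗ ρ =
    mulLast k H (M ⊗[k] H) ∘ₗ antLast k H ((M ⊗[k] H) ⊗[k] H) ∘ₗ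
        LinearMap.rTensor H (LinearMap.rTensor H ρ) ∘ₗ LinearMap.rTensor H ρ ∘ₗ ρ
  pcm3 :
    LinearMap.rTensor H (mulLast k H M) ∘ₗ LinearMap.rTensor H (antLast k H (M ⊗[k] H)) ∘ₗ
        comulLast k H (M ⊗[k] H) ∘ₗ LinearMap.rTensor H ρ ∘ₗ ρ =
    LinearMap.rTensor H (mulLast k H M) ∘ₗ LinearMap.rTensor H (antLast k H (M ⊗[k] H)) ∘ₗ
        LinearMap.rTensor H (LinearMap.rTensor H ρ) ∘ₗ LinearMap.rTensor H ρ ∘ₗ ρ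

/-- A subspace `N` is a partial subcomodule when it is invariant under the coaction. -/
def IsSubcomodule {M : Type u} [AddCommGroup M] [Module k M]
    (ρ : M →ₗ[k] M ⊗[k] H) (N : Submodule k M) : Prop :=
  ∀ n ∈ N, ρ n ∈ LinearMap.range (LinearMap.rTensor H N.subtype)

end PartialComodules

section PartialComoduleCategory

variable (k : Type u) [Field k] (H : Type u) [Ring H] [HopfAlgebra k H]

/-- Objects of the category `PMod^H` of right partial `H`-comodules. -/
structure PComod where
  carrier : Type u
  [isAddCommGroup : AddCommGroup carrier]
  [isModule : Module k carrier]
  ρ : carrier →ₗ[k] carrier ⊗[k] H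
  isPartialComodule : IsPartialComodule k H ρ

attribute [instance] PComod.isAddCommGroup PComod.isModule

/-- Morphisms of partial comodules are linear maps commuting with the coactions. -/
instance : Category.{u} (PComod k H) where
  Hom A B := { f : A.carrier →ₗ[k] B.carrier // LinearMap.rTensor H f ∘ₗ A.ρ = B.ρ ∘ₗ f }
  id A := ⟨LinearMap.id, by simp [LinearMap.rTensor_id]⟩
  comp {A B C} f g := ⟨g.1 ∘ₗ f.1, by
    rw [LinearMap.rTensor_comp, LinearMap.comp_assoc, f.2, ← LinearMap.comp_assoc, g.2,
      LinearMap.comp_assoc]⟩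
  id_comp f := by apply Subtype.ext; simp
  comp_id f := by apply Subtype.ext; simp
  assoc f g h := by apply Subtype.ext; simp [LinearMap.comp_assoc]

/-- The forgetful functor from partial `H`-comodules to vector spaces. -/
def pforget : PComod k H ⥤ ModuleCat.{u} k where
  obj A := ModuleCat.of k A.carrier
  map f := ModuleCat.ofHom f.1
  map_id _ := rfl
  map_comp _ _ := rfl

end PartialComoduleCategory

section TPow

variable (k : Type u) [Field k] (H : Type u) [Ring H] [HopfAlgebra k H]
variable (M : Type u) [AddCommGroup M] [Module k M]


/-- The iterated tensor product `M ⊗ H^{⊗n}` (with all tensor factors associated to the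
left), as a bundled `k`-module. -/
def TPow : ℕ → ModuleCat.{u} k
  | 0 => ModuleCat.of k M
  | n + 1 => ModuleCat.of k (TPow n ⊗[k] H)

variable {M}

/-- `ρ ⊗ H^{⊗n} : M ⊗ H^{⊗n} → M ⊗ H^{⊗(n+1)}`. -/
def deepCoact (ρ : M →ₗ[k] M ⊗[k] H) : ∀ n : ℕ, TPow k H M n →ₗ[k] TPow k H M (n + 1)
  | 0 => ρ
  | n + 1 => LinearMap.rTensor H (deepCoact ρ n)

/-- The iterate `ρⁿ = (ρ ⊗ H^{⊗(n-1)}) ∘ ρ^{n-1} : M → M ⊗ H^{⊗n}`, with `ρ⁰ = id`. -/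
def coactPow (ρ : M →ₗ[k] M ⊗[k] H) : ∀ n : ℕ, M →ₗ[k] TPow k H M n
  | 0 => LinearMap.id
  | n + 1 => deepCoact k H ρ n ∘ₗ coactPow ρ n

/-- `M ⊗ ε ⊗ H^{⊗m} : M ⊗ H^{⊗(1+m)} → M ⊗ H^{⊗m}`. -/
def opCounit : ∀ m : ℕ, TPow k H M (1 + m) →ₗ[k] TPow k H M (0 + m)
  | 0 => counitLast k H M
  | m + 1 => LinearMap.rTensor H (opCounit m)

/-- `(M ⊗ H ⊗ μ)(M ⊗ H ⊗ H ⊗ S)(M ⊗ Δ ⊗ H) ⊗ H^{⊗m}` on `M ⊗ H^{⊗(2+m)}`. -/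
def opA2L : ∀ m : ℕ, TPow k H M (2 + m) →ₗ[k] TPow k H M (2 + m)
  | 0 => mulLast k H (M ⊗[k] H) ∘ₗ antLast k H ((M ⊗[k] H) ⊗[k] H) ∘ₗ
      LinearMap.rTensor H (comulLast k H M)
  | m + 1 => LinearMap.rTensor H (opA2L m)

/-- `(M ⊗ H ⊗ μ)(M ⊗ H ⊗ H ⊗ S) ⊗ H^{⊗m}` on `M ⊗ H^{⊗(3+m)}`. -/
def opA2R : ∀ m : ℕ, TPow k H M (3 + m) →ₗ[k] TPow k H M (2 + m)
  | 0 => mulLast k H (M ⊗[k] H) ∘ₗ antLast k H ((M ⊗[k] H) ⊗[k] H)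
  | m + 1 => LinearMap.rTensor H (opA2R m)

/-- `(M ⊗ μ ⊗ H)(M ⊗ H ⊗ S ⊗ H)(M ⊗ H ⊗ Δ) ⊗ H^{⊗m}` on `M ⊗ H^{⊗(2+m)}`. -/
def opA3L : ∀ m : ℕ, TPow k H M (2 + m) →ₗ[k] TPow k H M (2 + m)
  | 0 => LinearMap.rTensor H (mulLast k H M) ∘ₗ
      LinearMap.rTensor H (antLast k H (M ⊗[k] H)) ∘ₗ comulLast k H (M ⊗[k] H)
  | m + 1 => LinearMap.rTensor H (opA3L m)

/-- `(M ⊗ μ ⊗ H)(M ⊗ H ⊗ S ⊗ H) ⊗ H^{⊗m}` on `M ⊗ H^{⊗(3+m)}`. -/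
def opA3R : ∀ m : ℕ, TPow k H M (3 + m) →ₗ[k] TPow k H M (2 + m)
  | 0 => LinearMap.rTensor H (mulLast k H M) ∘ₗ
      LinearMap.rTensor H (antLast k H (M ⊗[k] H))
  | m + 1 => LinearMap.rTensor H (opA3R m)


end TPow

section CofreeConstruction

variable (k : Type u) [Field k] (H : Type u) [Ring H] [HopfAlgebra k H]

/-- The product space `P(V) = ∏_{n ≥ 0} V ⊗ H^{⊗n}`. -/
def ParProd (V : ModuleCat.{u} k) : Type u := ∀ n : ℕ, TPow k H V n

instance (V : ModuleCat.{u} k) : AddCommGroup (ParProd k H V) :=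
  inferInstanceAs (AddCommGroup (∀ n : ℕ, TPow k H V n))
instance (V : ModuleCat.{u} k) : Module k (ParProd k H V) :=
  inferInstanceAs (Module k (∀ n : ℕ, TPow k H V n))

/-- The shift map `σ`, sending `f = (fⁿ)ₙ` to the family with `n`-th component `f^{n+1}`,
viewed in `(V ⊗ H^{⊗n}) ⊗ H`. -/
def sigmaMap (V : ModuleCat.{u} k) :
    ParProd k H V →ₗ[k] ∀ n : ℕ, TPow k H V n ⊗[k] H :=
  LinearMap.pi (fun n => LinearMap.proj (n + 1))

/-- The canonical map `P(V) ⊗ H → ∏ₙ (V ⊗ H^{⊗n} ⊗ H)`. -/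
def canMap (V : ModuleCat.{u} k) :
    (ParProd k H V) ⊗[k] H →ₗ[k] ∀ n : ℕ, TPow k H V n ⊗[k] H :=
  LinearMap.pi (fun n => LinearMap.rTensor H (LinearMap.proj n))

/-- `σ(W) ⊆ W ⊗ H`: the image of `W` under `σ` lies in the image of the canonical
injection `W ⊗ H → ∏ₙ (V ⊗ H^{⊗n} ⊗ H)`. -/
def SigmaInvariant (V : ModuleCat.{u} k) (W : Submodule k (ParProd k H V)) : Prop :=
  ∀ w ∈ W, sigmaMap k H V w ∈
    LinearMap.range (canMap k H V ∘ₗ LinearMap.rTensor H W.subtype)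

/-- `σ` restricts to a partial `H`-comodule structure on `N`. -/
def SigmaPartialComodule (V : ModuleCat.{u} k) (N : Submodule k (ParProd k H V)) : Prop :=
  ∃ ρN : N →ₗ[k] N ⊗[k] H,
    (canMap k H V ∘ₗ LinearMap.rTensor H N.subtype) ∘ₗ ρN = sigmaMap k H V ∘ₗ N.subtype ∧
    IsPartialComodule k H ρN

/-- `R⁰(V)`: the largest subspace `W` of `P(V)` with `σ(W) ⊆ W ⊗ H`, i.e. the sum of all
such subspaces. -/
def R0sub (V : ModuleCat.{u} k) : Submodule k (ParProd k H V) :=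
  sSup { W : Submodule k (ParProd k H V) | SigmaInvariant k H V W }

/-- `R(V)`: the largest subspace of `R⁰(V)` on which `σ` restricts to a partial
`H`-comodule structure, i.e. the sum of all such subspaces. -/
def Rsub (V : ModuleCat.{u} k) : Submodule k (ParProd k H V) :=
  sSup { N : Submodule k (ParProd k H V) |
    N ≤ R0sub k H V ∧ SigmaInvariant k H V N ∧ SigmaPartialComodule k H V N }

/-- `φ ⊗ H^{⊗n} : V ⊗ H^{⊗n} → W ⊗ H^{⊗n}`. -/
def mapCore {V W : ModuleCat.{u} k} (φ : V →ₗ[k] W) :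
    ∀ n : ℕ, TPow k H V n →ₗ[k] TPow k H W n
  | 0 => φ
  | n + 1 => LinearMap.rTensor H (mapCore φ n)

/-- `∏ₙ (φ ⊗ H^{⊗n}) : P(V) → P(W)`. -/
def ParProdMap {V W : ModuleCat.{u} k} (φ : V →ₗ[k] W) : ParProd k H V →ₗ[k] ParProd k H W :=
  LinearMap.pi (fun n => mapCore k H φ n ∘ₗ LinearMap.proj n)

end CofreeConstruction

section AuxNat

variable (k : Type u) [Field k] (H : Type u) [Ring H] [HopfAlgebra k H]
variable {X Y : Type u} [AddCommGroup X] [Module k X] [AddCommGroup Y] [Module k Y]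

lemma nat_counit (f : X →ₗ[k] Y) :
    counitLast k H Y ∘ₗ LinearMap.rTensor H f = f ∘ₗ counitLast k H X := by
  apply TensorProduct.ext'
  intro x h
  simp [counitLast, TensorProduct.smul_tmul']

lemma nat_ant (f : X →ₗ[k] Y) :
    antLast k H Y ∘ₗ LinearMap.rTensor H f = LinearMap.rTensor H f ∘ₗ antLast k H X := by
  simp [antLast, LinearMap.lTensor_comp_rTensor, LinearMap.rTensor_comp_lTensor]

lemma nat_mul (f : X →ₗ[k] Y) :
    mulLast k H Y ∘ₗ LinearMap.rTensor H (LinearMap.rTensor H f)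
      = LinearMap.rTensor H f ∘ₗ mulLast k H X := by
  apply TensorProduct.ext'
  intro xh h
  induction xh using TensorProduct.induction_on with
  | zero => simp
  | tmul x h' => simp [mulLast]
  | add a b ha hb => simp_all [TensorProduct.add_tmul]

lemma nat_comul (f : X →ₗ[k] Y) :
    comulLast k H Y ∘ₗ LinearMap.rTensor H f
      = LinearMap.rTensor H (LinearMap.rTensor H f) ∘ₗ comulLast k H X := by
  apply TensorProduct.ext'
  intro x h
  simp only [comulLast, LinearMap.coe_comp, Function.comp_apply, LinearMap.rTensor_tmul,
    LinearMap.lTensor_tmul, LinearEquiv.coe_coe]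
  induction (Coalgebra.comul (R := k) (A := H) h) using TensorProduct.induction_on with
  | zero => simp
  | tmul a b => simp
  | add a b ha hb => simp_all [TensorProduct.tmul_add]

end AuxNat
section AuxPush

variable (k : Type u) [Field k] (H : Type u) [Ring H] [HopfAlgebra k H]

open LinearMap

variable {M : Type u} [AddCommGroup M] [Module k M]

/-- LHS of (PCM2). -/
def lhs2 (ρ : M →ₗ[k] M ⊗[k] H) : M →ₗ[k] (M ⊗[k] H) ⊗[k] H :=
  mulLast k H (M ⊗[k] H) ∘ₗ antLast k H ((M ⊗[k] H) ⊗[k] H) ∘ₗ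
    rTensor H (comulLast k H M) ∘ₗ rTensor H ρ ∘ₗ ρ

/-- RHS of (PCM2). -/
def rhs2 (ρ : M →ₗ[k] M ⊗[k] H) : M →ₗ[k] (M ⊗[k] H) ⊗[k] H :=
  mulLast k H (M ⊗[k] H) ∘ₗ antLast k H ((M ⊗[k] H) ⊗[k] H) ∘ₗ
    rTensor H (rTensor H ρ) ∘ₗ rTensor H ρ ∘ₗ ρ

/-- LHS of (PCM3). -/
def lhs3 (ρ : M →ₗ[k] M ⊗[k] H) : M →ₗ[k] (M ⊗[k] H) ⊗[k] H :=
  rTensor H (mulLast k H M) ∘ₗ rTensor H (antLast k H (M ⊗[k] H)) ∘ₗ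
    comulLast k H (M ⊗[k] H) ∘ₗ rTensor H ρ ∘ₗ ρ

/-- RHS of (PCM3). -/
def rhs3 (ρ : M →ₗ[k] M ⊗[k] H) : M →ₗ[k] (M ⊗[k] H) ⊗[k] H :=
  rTensor H (mulLast k H M) ∘ₗ rTensor H (antLast k H (M ⊗[k] H)) ∘ₗ
    rTensor H (rTensor H ρ) ∘ₗ rTensor H ρ ∘ₗ ρ

lemma isPartialComodule_iff (ρ : M →ₗ[k] M ⊗[k] H) :
    IsPartialComodule k H ρ ↔
      counitLast k H M ∘ₗ ρ = LinearMap.id ∧ lhs2 k H ρ = rhs2 k H ρ ∧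
        lhs3 k H ρ = rhs3 k H ρ := by
  constructor
  · intro h; exact ⟨h.counit, h.pcm2, h.pcm3⟩
  · intro h; exact ⟨h.1, h.2.1, h.2.2⟩

variable {M' : Type u} [AddCommGroup M'] [Module k M']
variable {f : M →ₗ[k] M'} {ρ : M →ₗ[k] M ⊗[k] H} {ρ' : M' →ₗ[k] M' ⊗[k] H}

lemma push_lhs2 (hf : ρ' ∘ₗ f = rTensor H f ∘ₗ ρ) :
    lhs2 k H ρ' ∘ₗ f = rTensor H (rTensor H f) ∘ₗ lhs2 k H ρ := by
  have h1 : rTensor H ρ' ∘ₗ rTensor H f = rTensor H (rTensor H f) ∘ₗ rTensor H ρ := by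
    rw [← rTensor_comp, hf, rTensor_comp]
  have h2 : rTensor H (comulLast k H M') ∘ₗ rTensor H (rTensor H f)
      = rTensor H (rTensor H (rTensor H f)) ∘ₗ rTensor H (comulLast k H M) := by
    rw [← rTensor_comp, nat_comul, rTensor_comp]
  have h3 := nat_ant k H (rTensor H (rTensor H f))
  have h4 := nat_mul k H (rTensor H f)
  calc lhs2 k H ρ' ∘ₗ f
      = mulLast k H (M' ⊗[k] H) ∘ₗ antLast k H ((M' ⊗[k] H) ⊗[k] H) ∘ₗ
        rTensor H (comulLast k H M') ∘ₗ (rTensor H ρ' ∘ₗ rTensor H f) ∘ₗ ρ := by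
        simp only [lhs2, comp_assoc, hf]
    _ = mulLast k H (M' ⊗[k] H) ∘ₗ antLast k H ((M' ⊗[k] H) ⊗[k] H) ∘ₗ
        (rTensor H (comulLast k H M') ∘ₗ rTensor H (rTensor H f)) ∘ₗ rTensor H ρ ∘ₗ ρ := by
        simp only [h1, comp_assoc]
    _ = mulLast k H (M' ⊗[k] H) ∘ₗ (antLast k H ((M' ⊗[k] H) ⊗[k] H) ∘ₗ
        rTensor H (rTensor H (rTensor H f))) ∘ₗ rTensor H (comulLast k H M) ∘ₗ
        rTensor H ρ ∘ₗ ρ := by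
        simp only [h2, comp_assoc]
    _ = (mulLast k H (M' ⊗[k] H) ∘ₗ rTensor H (rTensor H (rTensor H f))) ∘ₗ
        antLast k H ((M ⊗[k] H) ⊗[k] H) ∘ₗ rTensor H (comulLast k H M) ∘ₗ
        rTensor H ρ ∘ₗ ρ := by
        simp only [h3, comp_assoc]
    _ = rTensor H (rTensor H f) ∘ₗ lhs2 k H ρ := by
        simp only [h4, lhs2, comp_assoc]

lemma push_rhs2 (hf : ρ' ∘ₗ f = rTensor H f ∘ₗ ρ) :
    rhs2 k H ρ' ∘ₗ f = rTensor H (rTensor H f) ∘ₗ rhs2 k H ρ := by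
  have h1 : rTensor H ρ' ∘ₗ rTensor H f = rTensor H (rTensor H f) ∘ₗ rTensor H ρ := by
    rw [← rTensor_comp, hf, rTensor_comp]
  have h2 : rTensor H (rTensor H ρ') ∘ₗ rTensor H (rTensor H f)
      = rTensor H (rTensor H (rTensor H f)) ∘ₗ rTensor H (rTensor H ρ) := by
    rw [← rTensor_comp, ← rTensor_comp, ← rTensor_comp, hf, rTensor_comp]
  have h3 := nat_ant k H (rTensor H (rTensor H f))
  have h4 := nat_mul k H (rTensor H f)
  calc rhs2 k H ρ' ∘ₗ f
      = mulLast k H (M' ⊗[k] H) ∘ₗ antLast k H ((M' ⊗[k] H) ⊗[k] H) ∘ₗ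
        rTensor H (rTensor H ρ') ∘ₗ (rTensor H ρ' ∘ₗ rTensor H f) ∘ₗ ρ := by
        simp only [rhs2, comp_assoc, hf]
    _ = mulLast k H (M' ⊗[k] H) ∘ₗ antLast k H ((M' ⊗[k] H) ⊗[k] H) ∘ₗ
        (rTensor H (rTensor H ρ') ∘ₗ rTensor H (rTensor H f)) ∘ₗ rTensor H ρ ∘ₗ ρ := by
        simp only [h1, comp_assoc]
    _ = mulLast k H (M' ⊗[k] H) ∘ₗ (antLast k H ((M' ⊗[k] H) ⊗[k] H) ∘ₗ
        rTensor H (rTensor H (rTensor H f))) ∘ₗ rTensor H (rTensor H ρ) ∘ₗ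
        rTensor H ρ ∘ₗ ρ := by
        simp only [h2, comp_assoc]
    _ = (mulLast k H (M' ⊗[k] H) ∘ₗ rTensor H (rTensor H (rTensor H f))) ∘ₗ
        antLast k H ((M ⊗[k] H) ⊗[k] H) ∘ₗ rTensor H (rTensor H ρ) ∘ₗ
        rTensor H ρ ∘ₗ ρ := by
        simp only [h3, comp_assoc]
    _ = rTensor H (rTensor H f) ∘ₗ rhs2 k H ρ := by
        simp only [h4, rhs2, comp_assoc]

lemma push_lhs3 (hf : ρ' ∘ₗ f = rTensor H f ∘ₗ ρ) :
    lhs3 k H ρ' ∘ₗ f = rTensor H (rTensor H f) ∘ₗ lhs3 k H ρ := by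
  have h1 : rTensor H ρ' ∘ₗ rTensor H f = rTensor H (rTensor H f) ∘ₗ rTensor H ρ := by
    rw [← rTensor_comp, hf, rTensor_comp]
  have h2 := nat_comul k H (rTensor H f)
  have h3 : rTensor H (antLast k H (M' ⊗[k] H)) ∘ₗ rTensor H (rTensor H (rTensor H f))
      = rTensor H (rTensor H (rTensor H f)) ∘ₗ rTensor H (antLast k H (M ⊗[k] H)) := by
    rw [← rTensor_comp, nat_ant, rTensor_comp]
  have h4 : rTensor H (mulLast k H M') ∘ₗ rTensor H (rTensor H (rTensor H f))
      = rTensor H (rTensor H f) ∘ₗ rTensor H (mulLast k H M) := by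
    rw [← rTensor_comp, nat_mul, rTensor_comp]
  calc lhs3 k H ρ' ∘ₗ f
      = rTensor H (mulLast k H M') ∘ₗ rTensor H (antLast k H (M' ⊗[k] H)) ∘ₗ
        comulLast k H (M' ⊗[k] H) ∘ₗ (rTensor H ρ' ∘ₗ rTensor H f) ∘ₗ ρ := by
        simp only [lhs3, comp_assoc, hf]
    _ = rTensor H (mulLast k H M') ∘ₗ rTensor H (antLast k H (M' ⊗[k] H)) ∘ₗ
        (comulLast k H (M' ⊗[k] H) ∘ₗ rTensor H (rTensor H f)) ∘ₗ rTensor H ρ ∘ₗ ρ := by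
        simp only [h1, comp_assoc]
    _ = rTensor H (mulLast k H M') ∘ₗ (rTensor H (antLast k H (M' ⊗[k] H)) ∘ₗ
        rTensor H (rTensor H (rTensor H f))) ∘ₗ comulLast k H (M ⊗[k] H) ∘ₗ
        rTensor H ρ ∘ₗ ρ := by
        simp only [h2, comp_assoc]
    _ = (rTensor H (mulLast k H M') ∘ₗ rTensor H (rTensor H (rTensor H f))) ∘ₗ
        rTensor H (antLast k H (M ⊗[k] H)) ∘ₗ comulLast k H (M ⊗[k] H) ∘ₗ
        rTensor H ρ ∘ₗ ρ := by
        simp only [h3, comp_assoc]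
    _ = rTensor H (rTensor H f) ∘ₗ lhs3 k H ρ := by
        simp only [h4, lhs3, comp_assoc]

lemma push_rhs3 (hf : ρ' ∘ₗ f = rTensor H f ∘ₗ ρ) :
    rhs3 k H ρ' ∘ₗ f = rTensor H (rTensor H f) ∘ₗ rhs3 k H ρ := by
  have h1 : rTensor H ρ' ∘ₗ rTensor H f = rTensor H (rTensor H f) ∘ₗ rTensor H ρ := by
    rw [← rTensor_comp, hf, rTensor_comp]
  have h2 : rTensor H (rTensor H ρ') ∘ₗ rTensor H (rTensor H f)
      = rTensor H (rTensor H (rTensor H f)) ∘ₗ rTensor H (rTensor H ρ) := by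
    rw [← rTensor_comp, ← rTensor_comp, ← rTensor_comp, hf, rTensor_comp]
  have h3 : rTensor H (antLast k H (M' ⊗[k] H)) ∘ₗ rTensor H (rTensor H (rTensor H f))
      = rTensor H (rTensor H (rTensor H f)) ∘ₗ rTensor H (antLast k H (M ⊗[k] H)) := by
    rw [← rTensor_comp, nat_ant, rTensor_comp]
  have h4 : rTensor H (mulLast k H M') ∘ₗ rTensor H (rTensor H (rTensor H f))
      = rTensor H (rTensor H f) ∘ₗ rTensor H (mulLast k H M) := by
    rw [← rTensor_comp, nat_mul, rTensor_comp]
  calc rhs3 k H ρ' ∘ₗ f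
      = rTensor H (mulLast k H M') ∘ₗ rTensor H (antLast k H (M' ⊗[k] H)) ∘ₗ
        rTensor H (rTensor H ρ') ∘ₗ (rTensor H ρ' ∘ₗ rTensor H f) ∘ₗ ρ := by
        simp only [rhs3, comp_assoc, hf]
    _ = rTensor H (mulLast k H M') ∘ₗ rTensor H (antLast k H (M' ⊗[k] H)) ∘ₗ
        (rTensor H (rTensor H ρ') ∘ₗ rTensor H (rTensor H f)) ∘ₗ rTensor H ρ ∘ₗ ρ := by
        simp only [h1, comp_assoc]
    _ = rTensor H (mulLast k H M') ∘ₗ (rTensor H (antLast k H (M' ⊗[k] H)) ∘ₗ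
        rTensor H (rTensor H (rTensor H f))) ∘ₗ rTensor H (rTensor H ρ) ∘ₗ
        rTensor H ρ ∘ₗ ρ := by
        simp only [h2, comp_assoc]
    _ = (rTensor H (mulLast k H M') ∘ₗ rTensor H (rTensor H (rTensor H f))) ∘ₗ
        rTensor H (antLast k H (M ⊗[k] H)) ∘ₗ rTensor H (rTensor H ρ) ∘ₗ
        rTensor H ρ ∘ₗ ρ := by
        simp only [h3, comp_assoc]
    _ = rTensor H (rTensor H f) ∘ₗ rhs3 k H ρ := by
        simp only [h4, rhs3, comp_assoc]

lemma push_counit (hf : ρ' ∘ₗ f = rTensor H f ∘ₗ ρ) :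
    (counitLast k H M' ∘ₗ ρ') ∘ₗ f = f ∘ₗ (counitLast k H M ∘ₗ ρ) := by
  calc (counitLast k H M' ∘ₗ ρ') ∘ₗ f
      = (counitLast k H M' ∘ₗ rTensor H f) ∘ₗ ρ := by simp only [comp_assoc, hf]
    _ = f ∘ₗ counitLast k H M ∘ₗ ρ := by rw [nat_counit]; simp only [comp_assoc]
    _ = _ := by simp only [comp_assoc]

/-- Transport a partial comodule structure along a surjective compatible map. -/
lemma isPartialComodule_of_surjective (hf : ρ' ∘ₗ f = rTensor H f ∘ₗ ρ)
    (hsurj : Function.Surjective f) (hρ : IsPartialComodule k H ρ) :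
    IsPartialComodule k H ρ' := by
  rw [isPartialComodule_iff] at hρ ⊢
  obtain ⟨hc, h2, h3⟩ := hρ
  refine ⟨?_, ?_, ?_⟩
  · rw [← LinearMap.cancel_right hsurj, push_counit k H hf, hc]
    simp
  · rw [← LinearMap.cancel_right hsurj, push_lhs2 k H hf, push_rhs2 k H hf, h2]
  · rw [← LinearMap.cancel_right hsurj, push_lhs3 k H hf, push_rhs3 k H hf, h3]

end AuxPush
section AuxInj

variable (k : Type u) [Field k] (H : Type u) [Ring H] [HopfAlgebra k H]

open LinearMap

variable {X Y : Type u} [AddCommGroup X] [Module k X] [AddCommGroup Y] [Module k Y]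

lemma rTensor_inj {f : X →ₗ[k] Y} (hf : Function.Injective f) :
    Function.Injective (rTensor (R := k) H f) := by
  obtain ⟨g, hg⟩ := f.exists_leftInverse_of_injective (ker_eq_bot_of_injective hf)
  have : rTensor (R := k) H g ∘ₗ rTensor H f = LinearMap.id := by
    rw [← rTensor_comp, hg, rTensor_id]
  intro a b hab
  have h2 : rTensor (R := k) H g ((rTensor H f) a) = rTensor H g ((rTensor H f) b) :=
    congrArg _ hab
  rwa [← LinearMap.comp_apply, ← LinearMap.comp_apply, this, LinearMap.id_apply,
    LinearMap.id_apply] at h2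

attribute [local instance] Classical.decEq

/-- The coordinate equivalence `M ⊗ H ≃ ι →₀ M` given by a fixed basis of `H`. -/
def chi (M : Type u) [AddCommGroup M] [Module k M] :
    M ⊗[k] H ≃ₗ[k] ((Module.Basis.ofVectorSpaceIndex k H) →₀ M) :=
  (LinearEquiv.lTensor M (Module.Basis.ofVectorSpace k H).repr).trans
    (TensorProduct.finsuppScalarRight k k M _)

lemma chi_nat (f : X →ₗ[k] Y) (t : X ⊗[k] H) (i : Module.Basis.ofVectorSpaceIndex k H) :
    chi k H Y (rTensor H f t) i = f (chi k H X t i) := by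
  induction t using TensorProduct.induction_on with
  | zero => simp
  | tmul x h =>
      simp [chi, TensorProduct.finsuppScalarRight_apply_tmul_apply, LinearEquiv.lTensor,
        TensorProduct.congr_tmul]
  | add a b ha hb => simp_all

lemma canMap_inj (V : ModuleCat.{u} k) : Function.Injective (canMap k H V) := by
  intro a b hab
  rw [← sub_eq_zero] at hab ⊢
  rw [← map_sub] at hab
  set t := a - b with ht
  apply (chi k H (ParProd k H V)).injective
  rw [map_zero]
  ext i
  rw [Finsupp.zero_apply]
  funext n
  have hn : rTensor H (LinearMap.proj (R := k) (φ := fun n => TPow k H V n) n) t = 0 := by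
    have h4 := congrFun hab n
    exact h4
  have h3 := chi_nat k H (LinearMap.proj (R := k) (φ := fun n => TPow k H V n) n) t i
  rw [hn, map_zero] at h3
  exact h3.symm

end AuxInj
section AuxInd

variable (k : Type u) [Field k] (H : Type u) [Ring H] [HopfAlgebra k H]

open LinearMap

variable {V : ModuleCat.{u} k}

/-- The canonical injection `W ⊗ H → ∏ₙ (V ⊗ H^{⊗n} ⊗ H)`. -/
def jmap (W : Submodule k (ParProd k H V)) :
    (↥W ⊗[k] H) →ₗ[k] ∀ n : ℕ, TPow k H V n ⊗[k] H :=
  canMap k H V ∘ₗ rTensor H W.subtype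

lemma jmap_inj (W : Submodule k (ParProd k H V)) : Function.Injective (jmap k H W) := by
  have h1 := rTensor_inj k H (f := W.subtype) (Subtype.val_injective)
  exact (canMap_inj k H V).comp h1

/-- The induced coaction on a `σ`-invariant subspace. -/
def indRho {W : Submodule k (ParProd k H V)} (hW : SigmaInvariant k H V W) :
    ↥W →ₗ[k] ↥W ⊗[k] H :=
  (LinearEquiv.ofInjective (jmap k H W) (jmap_inj k H W)).symm.toLinearMap ∘ₗ
    LinearMap.codRestrict (LinearMap.range (jmap k H W))
      (sigmaMap k H V ∘ₗ W.subtype) (fun x => by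
        have := hW x.1 x.2
        simpa [jmap, LinearMap.comp_assoc] using this)

lemma jmap_indRho {W : Submodule k (ParProd k H V)} (hW : SigmaInvariant k H V W) :
    jmap k H W ∘ₗ indRho k H hW = sigmaMap k H V ∘ₗ W.subtype := by
  have key : ∀ y : LinearMap.range (jmap k H W),
      jmap k H W ((LinearEquiv.ofInjective (jmap k H W) (jmap_inj k H W)).symm y) = y.1 := by
    intro y
    conv_rhs => rw [← (LinearEquiv.ofInjective (jmap k H W)
      (jmap_inj k H W)).apply_symm_apply y]
    rw [LinearEquiv.ofInjective_apply]
  apply LinearMap.ext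
  intro x
  simp only [LinearMap.comp_apply, indRho, LinearEquiv.coe_coe]
  rw [key]
  rfl

lemma indRho_unique {W : Submodule k (ParProd k H V)} (hW : SigmaInvariant k H V W)
    (ρ' : ↥W →ₗ[k] ↥W ⊗[k] H) (h : jmap k H W ∘ₗ ρ' = sigmaMap k H V ∘ₗ W.subtype) :
    ρ' = indRho k H hW := by
  have := jmap_indRho k H hW
  apply LinearMap.ext
  intro x
  exact jmap_inj k H W (by rw [← LinearMap.comp_apply, ← LinearMap.comp_apply, h, this])

/-- Compatibility of induced coactions along inclusions. -/
lemma indRho_incl {W₁ W₂ : Submodule k (ParProd k H V)} (h12 : W₁ ≤ W₂)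
    (h1 : SigmaInvariant k H V W₁) (h2 : SigmaInvariant k H V W₂) :
    indRho k H h2 ∘ₗ Submodule.inclusion h12
      = rTensor H (Submodule.inclusion h12) ∘ₗ indRho k H h1 := by
  apply jmap_inj k H W₂ |> LinearMap.cancel_left |>.mp
  have hsub : W₂.subtype ∘ₗ Submodule.inclusion h12 = W₁.subtype := by
    ext x; rfl
  calc jmap k H W₂ ∘ₗ indRho k H h2 ∘ₗ Submodule.inclusion h12
      = (jmap k H W₂ ∘ₗ indRho k H h2) ∘ₗ Submodule.inclusion h12 := by
        rw [LinearMap.comp_assoc]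
    _ = sigmaMap k H V ∘ₗ W₂.subtype ∘ₗ Submodule.inclusion h12 := by
        rw [jmap_indRho k H h2, LinearMap.comp_assoc]
    _ = sigmaMap k H V ∘ₗ W₁.subtype := by rw [hsub]
    _ = jmap k H W₁ ∘ₗ indRho k H h1 := (jmap_indRho k H h1).symm
    _ = (canMap k H V ∘ₗ rTensor H (W₂.subtype ∘ₗ Submodule.inclusion h12)) ∘ₗ
          indRho k H h1 := by rw [hsub]; rfl
    _ = jmap k H W₂ ∘ₗ rTensor H (Submodule.inclusion h12) ∘ₗ indRho k H h1 := by
        rw [rTensor_comp]; simp only [jmap, LinearMap.comp_assoc]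

end AuxInd
section AuxRsub

variable (k : Type u) [Field k] (H : Type u) [Ring H] [HopfAlgebra k H]

open LinearMap

variable {V : ModuleCat.{u} k}

/-- The defining family of subspaces for `Rsub`. -/
def RsubSet (V : ModuleCat.{u} k) : Set (Submodule k (ParProd k H V)) :=
  { N : Submodule k (ParProd k H V) |
    N ≤ R0sub k H V ∧ SigmaInvariant k H V N ∧ SigmaPartialComodule k H V N }

lemma Rsub_eq : Rsub k H V = sSup (RsubSet k H V) := rfl

lemma mem_Rsub_induction {x : ParProd k H V} (hx : x ∈ Rsub k H V)
    {C : ParProd k H V → Prop} (hzero : C 0)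
    (hadd : ∀ a b, a ∈ Rsub k H V → b ∈ Rsub k H V → C a → C b → C (a + b))
    (hmem : ∀ N ∈ RsubSet k H V, ∀ y ∈ N, C y) : C x := by
  have heq : Rsub k H V = ⨆ N : RsubSet k H V, (N : Submodule k (ParProd k H V)) :=
    sSup_eq_iSup' _
  have hx' : x ∈ ⨆ N : RsubSet k H V, (N : Submodule k (ParProd k H V)) := by
    rwa [heq] at hx
  have hmem' : ∀ z, z ∈ (⨆ N : RsubSet k H V, (N : Submodule k (ParProd k H V)))
      → z ∈ Rsub k H V := fun z hz => by rwa [heq]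
  refine Submodule.iSup_induction' (motive := fun y _ => C y) _
    (fun N y hy => hmem N.1 N.2 y hy) hzero ?_ hx'
  intro a b ha hb hCa hCb
  exact hadd a b (hmem' a ha) (hmem' b hb) hCa hCb

lemma sigmaInvariant_Rsub (V : ModuleCat.{u} k) : SigmaInvariant k H V (Rsub k H V) := by
  intro w hw
  refine mem_Rsub_induction k H hw
    (C := fun v => sigmaMap k H V v ∈
      LinearMap.range (canMap k H V ∘ₗ rTensor H (Rsub k H V).subtype)) ?_ ?_ ?_
  · simp only [map_zero]; exact zero_mem _
  · intro a b _ _ ha hb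
    rw [map_add]; exact add_mem ha hb
  · intro N hN y hy
    obtain ⟨t, ht⟩ := hN.2.1 y hy
    refine ⟨rTensor H (Submodule.inclusion (le_sSup hN)) t, ?_⟩
    rw [← ht]
    have hcomp : rTensor (R := k) H (Rsub k H V).subtype ∘ₗ
        rTensor H (Submodule.inclusion (le_sSup hN)) = rTensor H N.subtype := by
      rw [← rTensor_comp]
      congr 1
    have hct := LinearMap.congr_fun hcomp t
    simp only [LinearMap.comp_apply] at hct
    exact congrArg (canMap k H V) hct

lemma indRho_Rsub_mem {N : Submodule k (ParProd k H V)} (hN : N ∈ RsubSet k H V) :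
    indRho k H (sigmaInvariant_Rsub k H V) ∘ₗ Submodule.inclusion (le_sSup hN)
      = rTensor H (Submodule.inclusion (le_sSup hN)) ∘ₗ indRho k H hN.2.1 :=
  indRho_incl k H (le_sSup hN) hN.2.1 (sigmaInvariant_Rsub k H V)

lemma isPartialComodule_Rsub (V : ModuleCat.{u} k) :
    IsPartialComodule k H (indRho k H (sigmaInvariant_Rsub k H V)) := by
  rw [isPartialComodule_iff]
  -- prove each axiom elementwise via the sum decomposition
  have main : ∀ (x : ParProd k H V) (hx : x ∈ Rsub k H V),
      (counitLast k H _ ∘ₗ (indRho k H (sigmaInvariant_Rsub k H V))) ⟨x, hx⟩ = LinearMap.id (R := k) ⟨x, hx⟩ ∧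
      lhs2 k H (indRho k H (sigmaInvariant_Rsub k H V)) ⟨x, hx⟩ = rhs2 k H (indRho k H (sigmaInvariant_Rsub k H V)) ⟨x, hx⟩ ∧
      lhs3 k H (indRho k H (sigmaInvariant_Rsub k H V)) ⟨x, hx⟩ = rhs3 k H (indRho k H (sigmaInvariant_Rsub k H V)) ⟨x, hx⟩ := by
    intro x hx
    refine mem_Rsub_induction k H (C := fun v => ∀ hv : v ∈ Rsub k H V,
      (counitLast k H _ ∘ₗ (indRho k H (sigmaInvariant_Rsub k H V))) ⟨v, hv⟩ = LinearMap.id (R := k) ⟨v, hv⟩ ∧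
      lhs2 k H (indRho k H (sigmaInvariant_Rsub k H V)) ⟨v, hv⟩ = rhs2 k H (indRho k H (sigmaInvariant_Rsub k H V)) ⟨v, hv⟩ ∧
      lhs3 k H (indRho k H (sigmaInvariant_Rsub k H V)) ⟨v, hv⟩ = rhs3 k H (indRho k H (sigmaInvariant_Rsub k H V)) ⟨v, hv⟩) hx ?_ ?_ ?_ hx
    · intro hv
      have h0 : (⟨0, hv⟩ : ↥(Rsub k H V)) = 0 := rfl
      simp [h0]
    · intro a b hamem hbmem ha hb hv
      have hab : (⟨a + b, hv⟩ : ↥(Rsub k H V))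
          = (⟨a, hamem⟩ : ↥(Rsub k H V)) + ⟨b, hbmem⟩ := rfl
      obtain ⟨ha1, ha2, ha3⟩ := ha hamem
      obtain ⟨hb1, hb2, hb3⟩ := hb hbmem
      refine ⟨?_, ?_, ?_⟩ <;> rw [hab] <;> simp only [map_add]
      · rw [ha1, hb1]
      · rw [ha2, hb2]
      · rw [ha3, hb3]
    · intro N hN y hy hv
      -- choose a partial comodule structure on N; it must agree with indRho
      obtain ⟨ρN, hcompat, hpc⟩ := hN.2.2
      have hρN : ρN = indRho k H hN.2.1 := by
        apply indRho_unique
        rw [← hcompat]; rfl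
      subst hρN
      have hincl := indRho_Rsub_mem k H hN
      have h2 := push_lhs2 k H (M := ↥N) (M' := ↥(Rsub k H V)) hincl
      have h2' := push_rhs2 k H (M := ↥N) (M' := ↥(Rsub k H V)) hincl
      have h3 := push_lhs3 k H (M := ↥N) (M' := ↥(Rsub k H V)) hincl
      have h3' := push_rhs3 k H (M := ↥N) (M' := ↥(Rsub k H V)) hincl
      have hc := push_counit k H (M := ↥N) (M' := ↥(Rsub k H V)) hincl
      have hyy : (⟨y, hv⟩ : ↥(Rsub k H V)) = Submodule.inclusion (le_sSup hN) ⟨y, hy⟩ := rfl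
      rw [isPartialComodule_iff] at hpc
      refine ⟨?_, ?_, ?_⟩
      · have e1 := LinearMap.congr_fun hc ⟨y, hy⟩
        have e2 := LinearMap.congr_fun hpc.1 (⟨y, hy⟩ : ↥N)
        simp only [LinearMap.comp_apply] at e1 e2 ⊢
        exact e1.trans (by rw [e2]; rfl)
      · have e1 := LinearMap.congr_fun h2 ⟨y, hy⟩
        have e1' := LinearMap.congr_fun h2' ⟨y, hy⟩
        have e3 := LinearMap.congr_fun hpc.2.1 (⟨y, hy⟩ : ↥N)
        simp only [LinearMap.comp_apply] at e1 e1' ⊢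
        exact e1.trans (by rw [e3]; exact e1'.symm)
      · have e1 := LinearMap.congr_fun h3 ⟨y, hy⟩
        have e1' := LinearMap.congr_fun h3' ⟨y, hy⟩
        have e3 := LinearMap.congr_fun hpc.2.2 (⟨y, hy⟩ : ↥N)
        simp only [LinearMap.comp_apply] at e1 e1' ⊢
        exact e1.trans (by rw [e3]; exact e1'.symm)
  refine ⟨?_, ?_, ?_⟩
  · apply LinearMap.ext; rintro ⟨x, hx⟩; exact (main x hx).1
  · apply LinearMap.ext; rintro ⟨x, hx⟩; exact (main x hx).2.1
  · apply LinearMap.ext; rintro ⟨x, hx⟩; exact (main x hx).2.2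

end AuxRsub
section AuxFunct

variable (k : Type u) [Field k] (H : Type u) [Ring H] [HopfAlgebra k H]

open LinearMap

variable {M : Type u} [AddCommGroup M] [Module k M]

lemma coactPow_succ' (ρ : M →ₗ[k] M ⊗[k] H) (n : ℕ) :
    coactPow k H ρ (n + 1) = rTensor H (coactPow k H ρ n) ∘ₗ ρ := by
  induction n with
  | zero =>
      show deepCoact k H ρ 0 ∘ₗ LinearMap.id = rTensor H LinearMap.id ∘ₗ ρ
      rw [rTensor_id]
      rfl
  | succ n ih =>
      show rTensor H (deepCoact k H ρ n) ∘ₗ coactPow k H ρ (n + 1)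
        = rTensor H (coactPow k H ρ (n + 1)) ∘ₗ ρ
      conv_lhs => rw [ih]
      rw [← LinearMap.comp_assoc, ← rTensor_comp]
      rfl

variable {M' : Type u} [AddCommGroup M'] [Module k M']

lemma mapCore_coactPow {f : M →ₗ[k] M'} {ρ : M →ₗ[k] M ⊗[k] H} {ρ' : M' →ₗ[k] M' ⊗[k] H}
    (hf : ρ' ∘ₗ f = rTensor H f ∘ₗ ρ) (n : ℕ) :
    coactPow k H ρ' n ∘ₗ f
      = mapCore k H (V := ModuleCat.of k M) (W := ModuleCat.of k M') f n
        ∘ₗ coactPow k H ρ n := by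
  induction n with
  | zero => rfl
  | succ n ih =>
      rw [coactPow_succ', coactPow_succ']
      show rTensor H (coactPow k H ρ' n) ∘ₗ (ρ' ∘ₗ f) = rTensor H (mapCore k H
        (V := ModuleCat.of k M) (W := ModuleCat.of k M') f n) ∘ₗ rTensor H (coactPow k H ρ n) ∘ₗ ρ
      rw [hf, ← LinearMap.comp_assoc, ← rTensor_comp, ih, rTensor_comp, LinearMap.comp_assoc]

variable {V W : ModuleCat.{u} k}

lemma mapCore_id (n : ℕ) :
    mapCore k H (LinearMap.id (R := k) (M := V)) n = LinearMap.id := by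
  induction n with
  | zero => rfl
  | succ n ih => show rTensor H (mapCore k H _ n) = _; rw [ih, rTensor_id]; rfl

lemma mapCore_comp {Z : ModuleCat.{u} k} (φ : V →ₗ[k] W) (ψ : W →ₗ[k] Z) (n : ℕ) :
    mapCore k H (ψ ∘ₗ φ) n = mapCore k H ψ n ∘ₗ mapCore k H φ n := by
  induction n with
  | zero => rfl
  | succ n ih =>
      show rTensor H (mapCore k H _ n) = _
      rw [ih, rTensor_comp]
      rfl

/-- The product of the maps `(φ ⊗ H^{⊗n}) ⊗ H`. -/
def Qmap (φ : V →ₗ[k] W) :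
    (∀ n : ℕ, TPow k H V n ⊗[k] H) →ₗ[k] ∀ n : ℕ, TPow k H W n ⊗[k] H :=
  LinearMap.pi (fun n => rTensor H (mapCore k H φ n) ∘ₗ LinearMap.proj n)

lemma sigma_nat (φ : V →ₗ[k] W) :
    sigmaMap k H W ∘ₗ ParProdMap k H φ = Qmap k H φ ∘ₗ sigmaMap k H V := by
  apply LinearMap.ext
  intro f
  funext n
  rfl

lemma can_nat (φ : V →ₗ[k] W) :
    canMap k H W ∘ₗ rTensor H (ParProdMap k H φ) = Qmap k H φ ∘ₗ canMap k H V := by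
  apply TensorProduct.ext'
  intro f h
  funext n
  simp only [LinearMap.comp_apply, rTensor_tmul]
  rfl

end AuxFunct
section AuxMap

variable (k : Type u) [Field k] (H : Type u) [Ring H] [HopfAlgebra k H]

open LinearMap

variable {V W : ModuleCat.{u} k}

lemma mem_RsubSet_of {N : Submodule k (ParProd k H V)} (hinv : SigmaInvariant k H V N)
    (hpc : IsPartialComodule k H (indRho k H hinv)) : N ∈ RsubSet k H V := by
  refine ⟨le_sSup hinv, hinv, indRho k H hinv, ?_, hpc⟩
  rw [LinearMap.comp_assoc]
  exact jmap_indRho k H hinv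

/-- The image of `Rsub V` under `∏ₙ (φ ⊗ H^{⊗n})`. -/
def imageSub (φ : V →ₗ[k] W) : Submodule k (ParProd k H W) :=
  Submodule.map (ParProdMap k H φ) (Rsub k H V)

lemma sigmaInvariant_image (φ : V →ₗ[k] W) : SigmaInvariant k H W (imageSub k H φ) := by
  rintro w ⟨v, hv, rfl⟩
  obtain ⟨t, ht⟩ := sigmaInvariant_Rsub k H V v hv
  refine ⟨rTensor H (LinearMap.codRestrict (imageSub k H φ)
    (ParProdMap k H φ ∘ₗ (Rsub k H V).subtype)
    (fun x => ⟨x.1, x.2, rfl⟩)) t, ?_⟩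
  have h1 : (canMap k H W ∘ₗ rTensor H (imageSub k H φ).subtype) ∘ₗ
      rTensor H (LinearMap.codRestrict (imageSub k H φ)
        (ParProdMap k H φ ∘ₗ (Rsub k H V).subtype) (fun x => ⟨x.1, x.2, rfl⟩))
      = Qmap k H φ ∘ₗ canMap k H V ∘ₗ rTensor H (Rsub k H V).subtype := by
    rw [LinearMap.comp_assoc, ← rTensor_comp]
    have : (imageSub k H φ).subtype ∘ₗ LinearMap.codRestrict (imageSub k H φ)
        (ParProdMap k H φ ∘ₗ (Rsub k H V).subtype) (fun x => ⟨x.1, x.2, rfl⟩)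
        = ParProdMap k H φ ∘ₗ (Rsub k H V).subtype := by
      apply LinearMap.ext; intro x; rfl
    rw [this, rTensor_comp, ← LinearMap.comp_assoc, can_nat, LinearMap.comp_assoc]
  have h2 := LinearMap.congr_fun h1 t
  simp only [LinearMap.comp_apply] at h2 ⊢
  rw [h2]
  have h3 : sigmaMap k H W (ParProdMap k H φ v) = Qmap k H φ (sigmaMap k H V v) :=
    LinearMap.congr_fun (sigma_nat k H φ) v
  rw [h3]
  have h4 : canMap k H V (rTensor H (Rsub k H V).subtype t) = sigmaMap k H V v := by
    simpa only [LinearMap.comp_apply] using ht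
  rw [h4]

end AuxMap
section AuxMap2

variable (k : Type u) [Field k] (H : Type u) [Ring H] [HopfAlgebra k H]

open LinearMap

variable {V W : ModuleCat.{u} k}

/-- Corestriction of `∏ₙ (φ ⊗ H^{⊗n})` to a map `Rsub V → imageSub φ`. -/
def piRes (φ : V →ₗ[k] W) : ↥(Rsub k H V) →ₗ[k] ↥(imageSub k H φ) :=
  LinearMap.codRestrict (imageSub k H φ) (ParProdMap k H φ ∘ₗ (Rsub k H V).subtype)
    (fun x => ⟨x.1, x.2, rfl⟩)

lemma piRes_surj (φ : V →ₗ[k] W) : Function.Surjective (piRes k H φ) := by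
  rintro ⟨w, v, hv, rfl⟩
  exact ⟨⟨v, hv⟩, rfl⟩

lemma subtype_piRes (φ : V →ₗ[k] W) :
    (imageSub k H φ).subtype ∘ₗ piRes k H φ = ParProdMap k H φ ∘ₗ (Rsub k H V).subtype := by
  apply LinearMap.ext; intro x; rfl

lemma indRho_piRes (φ : V →ₗ[k] W) :
    indRho k H (sigmaInvariant_image k H φ) ∘ₗ piRes k H φ
      = rTensor H (piRes k H φ) ∘ₗ indRho k H (sigmaInvariant_Rsub k H V) := by
  apply (LinearMap.cancel_left (jmap_inj k H (imageSub k H φ))).mp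
  rw [← LinearMap.comp_assoc, jmap_indRho]
  calc (sigmaMap k H W ∘ₗ (imageSub k H φ).subtype) ∘ₗ piRes k H φ
      = sigmaMap k H W ∘ₗ ParProdMap k H φ ∘ₗ (Rsub k H V).subtype := by
        rw [LinearMap.comp_assoc, subtype_piRes]
    _ = Qmap k H φ ∘ₗ sigmaMap k H V ∘ₗ (Rsub k H V).subtype := by
        rw [← LinearMap.comp_assoc, sigma_nat, LinearMap.comp_assoc]
    _ = Qmap k H φ ∘ₗ jmap k H (Rsub k H V) ∘ₗ indRho k H (sigmaInvariant_Rsub k H V) := by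
        rw [jmap_indRho]
    _ = (Qmap k H φ ∘ₗ canMap k H V) ∘ₗ rTensor H (Rsub k H V).subtype ∘ₗ
          indRho k H (sigmaInvariant_Rsub k H V) := by
        simp only [jmap, LinearMap.comp_assoc]
    _ = canMap k H W ∘ₗ (rTensor H (ParProdMap k H φ) ∘ₗ rTensor H (Rsub k H V).subtype) ∘ₗ
          indRho k H (sigmaInvariant_Rsub k H V) := by
        rw [← can_nat]; simp only [LinearMap.comp_assoc]
    _ = canMap k H W ∘ₗ (rTensor H ((imageSub k H φ).subtype ∘ₗ piRes k H φ)) ∘ₗ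
          indRho k H (sigmaInvariant_Rsub k H V) := by
        rw [subtype_piRes, rTensor_comp]
    _ = jmap k H (imageSub k H φ) ∘ₗ rTensor H (piRes k H φ) ∘ₗ
          indRho k H (sigmaInvariant_Rsub k H V) := by
        rw [rTensor_comp]; simp only [jmap, LinearMap.comp_assoc]

lemma image_mem_RsubSet (φ : V →ₗ[k] W) : imageSub k H φ ∈ RsubSet k H W :=
  mem_RsubSet_of k H (sigmaInvariant_image k H φ)
    (isPartialComodule_of_surjective k H (indRho_piRes k H φ) (piRes_surj k H φ)
      (isPartialComodule_Rsub k H V))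

/-- The linear map `Rsub V → Rsub W` induced by `φ`. -/
def RsubMap (φ : V →ₗ[k] W) : ↥(Rsub k H V) →ₗ[k] ↥(Rsub k H W) :=
  Submodule.inclusion (le_sSup (image_mem_RsubSet k H φ)) ∘ₗ piRes k H φ

lemma subtype_RsubMap (φ : V →ₗ[k] W) :
    (Rsub k H W).subtype ∘ₗ RsubMap k H φ = ParProdMap k H φ ∘ₗ (Rsub k H V).subtype := by
  apply LinearMap.ext; intro x; rfl

lemma indRho_RsubMap (φ : V →ₗ[k] W) :
    indRho k H (sigmaInvariant_Rsub k H W) ∘ₗ RsubMap k H φ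
      = rTensor H (RsubMap k H φ) ∘ₗ indRho k H (sigmaInvariant_Rsub k H V) := by
  have h1 := indRho_incl k H (W₂ := Rsub k H W) (le_sSup (image_mem_RsubSet k H φ))
    (sigmaInvariant_image k H φ) (sigmaInvariant_Rsub k H W)
  calc indRho k H (sigmaInvariant_Rsub k H W) ∘ₗ RsubMap k H φ
      = (indRho k H (sigmaInvariant_Rsub k H W) ∘ₗ
          Submodule.inclusion (p' := Rsub k H W) (le_sSup (image_mem_RsubSet k H φ))) ∘ₗ piRes k H φ := by
        simp only [RsubMap, LinearMap.comp_assoc]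
    _ = rTensor H (Submodule.inclusion (p' := Rsub k H W) (le_sSup (image_mem_RsubSet k H φ))) ∘ₗ
          indRho k H (sigmaInvariant_image k H φ) ∘ₗ piRes k H φ := by
        rw [h1, LinearMap.comp_assoc]
    _ = rTensor H (Submodule.inclusion (p' := Rsub k H W) (le_sSup (image_mem_RsubSet k H φ))) ∘ₗ
          rTensor H (piRes k H φ) ∘ₗ indRho k H (sigmaInvariant_Rsub k H V) := by
        rw [indRho_piRes]
    _ = rTensor H (RsubMap k H φ) ∘ₗ indRho k H (sigmaInvariant_Rsub k H V) := by
        rw [RsubMap, rTensor_comp, LinearMap.comp_assoc]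

end AuxMap2
section AuxEta

variable (k : Type u) [Field k] (H : Type u) [Ring H] [HopfAlgebra k H]

open LinearMap

/-- The map `m ↦ (ρⁿ(m))ₙ`. -/
def etaFun (A : PComod k H) :
    A.carrier →ₗ[k] ParProd k H (ModuleCat.of k A.carrier) :=
  LinearMap.pi (fun n => coactPow k H A.ρ n)

lemma sigma_eta (A : PComod k H) :
    sigmaMap k H (ModuleCat.of k A.carrier) ∘ₗ etaFun k H A
      = canMap k H (ModuleCat.of k A.carrier) ∘ₗ rTensor H (etaFun k H A) ∘ₗ A.ρ := by
  apply LinearMap.ext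
  intro a
  funext n
  have e1 : rTensor (R := k) H
        (LinearMap.proj (φ := fun n => TPow k H (ModuleCat.of k A.carrier) n) n) ∘ₗ
        rTensor H (etaFun k H A) = rTensor H (coactPow k H A.ρ n) := by
    apply TensorProduct.ext'; intro x h; rfl
  have e2 := LinearMap.congr_fun e1 (A.ρ a)
  simp only [LinearMap.comp_apply] at e2
  show coactPow k H A.ρ (n + 1) a = _
  rw [coactPow_succ']
  exact (congrArg (fun g => g) e2).symm

/-- The image of `etaFun`. -/
def etaRange (A : PComod k H) : Submodule k (ParProd k H (ModuleCat.of k A.carrier)) :=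
  LinearMap.range (etaFun k H A)

/-- Corestriction of `etaFun` to its range. -/
def etaCod (A : PComod k H) : A.carrier →ₗ[k] ↥(etaRange k H A) :=
  (etaFun k H A).rangeRestrict

lemma subtype_etaCod (A : PComod k H) :
    (etaRange k H A).subtype ∘ₗ etaCod k H A = etaFun k H A := by
  apply LinearMap.ext; intro x; rfl

lemma etaCod_surj (A : PComod k H) : Function.Surjective (etaCod k H A) :=
  (etaFun k H A).surjective_rangeRestrict

lemma sigmaInvariant_etaRange (A : PComod k H) :
    SigmaInvariant k H (ModuleCat.of k A.carrier) (etaRange k H A) := by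
  rintro w ⟨a, rfl⟩
  refine ⟨rTensor H (etaCod k H A) (A.ρ a), ?_⟩
  have h1 : (canMap k H (ModuleCat.of k A.carrier) ∘ₗ rTensor H (etaRange k H A).subtype) ∘ₗ
      rTensor H (etaCod k H A) = canMap k H (ModuleCat.of k A.carrier) ∘ₗ
        rTensor H (etaFun k H A) := by
    rw [LinearMap.comp_assoc, ← rTensor_comp, subtype_etaCod]
  have h2 := LinearMap.congr_fun h1 (A.ρ a)
  have h3 := LinearMap.congr_fun (sigma_eta k H A) a
  simp only [LinearMap.comp_apply] at h2 h3 ⊢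
  rw [h2, ← h3]

lemma indRho_etaCod (A : PComod k H) :
    indRho k H (sigmaInvariant_etaRange k H A) ∘ₗ etaCod k H A
      = rTensor H (etaCod k H A) ∘ₗ A.ρ := by
  apply (LinearMap.cancel_left (jmap_inj k H (etaRange k H A))).mp
  rw [← LinearMap.comp_assoc, jmap_indRho]
  calc (sigmaMap k H (ModuleCat.of k A.carrier) ∘ₗ (etaRange k H A).subtype) ∘ₗ etaCod k H A
      = sigmaMap k H (ModuleCat.of k A.carrier) ∘ₗ etaFun k H A := by
        rw [LinearMap.comp_assoc, subtype_etaCod]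
    _ = canMap k H (ModuleCat.of k A.carrier) ∘ₗ rTensor H (etaFun k H A) ∘ₗ A.ρ :=
        sigma_eta k H A
    _ = canMap k H (ModuleCat.of k A.carrier) ∘ₗ
          rTensor H ((etaRange k H A).subtype ∘ₗ etaCod k H A) ∘ₗ A.ρ := by
        rw [subtype_etaCod]
    _ = jmap k H (etaRange k H A) ∘ₗ rTensor H (etaCod k H A) ∘ₗ A.ρ := by
        rw [rTensor_comp]; simp only [jmap, LinearMap.comp_assoc]

lemma etaRange_mem_RsubSet (A : PComod k H) :
    etaRange k H A ∈ RsubSet k H (ModuleCat.of k A.carrier) :=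
  mem_RsubSet_of k H (sigmaInvariant_etaRange k H A)
    (isPartialComodule_of_surjective k H (indRho_etaCod k H A) (etaCod_surj k H A)
      A.isPartialComodule)

/-- The unit map `A → Rsub(U A)`. -/
def etaMap (A : PComod k H) : A.carrier →ₗ[k] ↥(Rsub k H (ModuleCat.of k A.carrier)) :=
  Submodule.inclusion (le_sSup (etaRange_mem_RsubSet k H A)) ∘ₗ etaCod k H A

lemma subtype_etaMap (A : PComod k H) :
    (Rsub k H (ModuleCat.of k A.carrier)).subtype ∘ₗ etaMap k H A = etaFun k H A := by
  apply LinearMap.ext; intro x; rfl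

lemma indRho_etaMap (A : PComod k H) :
    indRho k H (sigmaInvariant_Rsub k H (ModuleCat.of k A.carrier)) ∘ₗ etaMap k H A
      = rTensor H (etaMap k H A) ∘ₗ A.ρ := by
  have h1 := indRho_incl k H (W₂ := Rsub k H (ModuleCat.of k A.carrier)) (le_sSup (etaRange_mem_RsubSet k H A))
    (sigmaInvariant_etaRange k H A)
    (sigmaInvariant_Rsub k H (ModuleCat.of k A.carrier))
  calc indRho k H (sigmaInvariant_Rsub k H (ModuleCat.of k A.carrier)) ∘ₗ etaMap k H A
      = (indRho k H (sigmaInvariant_Rsub k H (ModuleCat.of k A.carrier)) ∘ₗ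
          Submodule.inclusion (p' := Rsub k H (ModuleCat.of k A.carrier)) (le_sSup (etaRange_mem_RsubSet k H A))) ∘ₗ etaCod k H A := by
        simp only [etaMap, LinearMap.comp_assoc]
    _ = rTensor H (Submodule.inclusion (p' := Rsub k H (ModuleCat.of k A.carrier)) (le_sSup (etaRange_mem_RsubSet k H A))) ∘ₗ
          indRho k H (sigmaInvariant_etaRange k H A) ∘ₗ etaCod k H A := by
        rw [h1, LinearMap.comp_assoc]
    _ = rTensor H (Submodule.inclusion (p' := Rsub k H (ModuleCat.of k A.carrier)) (le_sSup (etaRange_mem_RsubSet k H A))) ∘ₗ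
          rTensor H (etaCod k H A) ∘ₗ A.ρ := by
        rw [indRho_etaCod]
    _ = rTensor H (etaMap k H A) ∘ₗ A.ρ := by
        rw [etaMap, rTensor_comp, LinearMap.comp_assoc]

end AuxEta
section AuxAssemble

variable (k : Type u) [Field k] (H : Type u) [Ring H] [HopfAlgebra k H]

open LinearMap

/-- Evaluation of `Rsub V` at degree `n`. -/
def evalMap (V : ModuleCat.{u} k) (n : ℕ) : ↥(Rsub k H V) →ₗ[k] TPow k H V n :=
  LinearMap.proj (φ := fun n => TPow k H V n) n ∘ₗ (Rsub k H V).subtype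

lemma star_eval (V : ModuleCat.{u} k) (n : ℕ) :
    rTensor H (evalMap k H V n) ∘ₗ indRho k H (sigmaInvariant_Rsub k H V)
      = evalMap k H V (n + 1) := by
  apply LinearMap.ext
  intro x
  have h := LinearMap.congr_fun (jmap_indRho k H (sigmaInvariant_Rsub k H V)) x
  simp only [LinearMap.comp_apply] at h
  have h2 := congrFun h n
  have h3 : rTensor (R := k) H (LinearMap.proj (φ := fun n => TPow k H V n) n) ∘ₗ
      rTensor H (Rsub k H V).subtype = rTensor H (evalMap k H V n) := by
    apply TensorProduct.ext'; intro x h; rfl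
  have h4 := LinearMap.congr_fun h3 (indRho k H (sigmaInvariant_Rsub k H V) x)
  simp only [LinearMap.comp_apply] at h4 ⊢
  rw [← h4]
  exact h2

/-- The functor `R`. -/
def Rfunctor : ModuleCat.{u} k ⥤ PComod k H where
  obj V :=
    { carrier := ↥(Rsub k H V)
      ρ := indRho k H (sigmaInvariant_Rsub k H V)
      isPartialComodule := isPartialComodule_Rsub k H V }
  map {V W} φ := ⟨RsubMap k H φ.hom, (indRho_RsubMap k H φ.hom).symm⟩
  map_id V := by
    apply Subtype.ext
    apply LinearMap.ext
    intro x
    apply Subtype.ext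
    show ParProdMap k H (𝟙 V : V ⟶ V).hom x.1 = x.1
    funext n
    show mapCore k H (𝟙 V : V ⟶ V).hom n (x.1 n) = x.1 n
    have : (𝟙 V : V ⟶ V).hom = LinearMap.id := rfl
    rw [this, mapCore_id]
    rfl
  map_comp {V W Z} φ ψ := by
    apply Subtype.ext
    apply LinearMap.ext
    intro x
    apply Subtype.ext
    show ParProdMap k H (φ ≫ ψ).hom x.1 = ParProdMap k H ψ.hom (ParProdMap k H φ.hom x.1)
    funext n
    show mapCore k H (φ ≫ ψ).hom n (x.1 n) = mapCore k H ψ.hom n (mapCore k H φ.hom n (x.1 n))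
    have : (φ ≫ ψ).hom = ψ.hom ∘ₗ φ.hom := rfl
    rw [this, mapCore_comp]
    rfl

lemma key_eval (V : ModuleCat.{u} k) (n : ℕ) :
    mapCore k H (V := ModuleCat.of k ↥(Rsub k H V)) (W := V) (evalMap k H V 0) n ∘ₗ
        coactPow k H (indRho k H (sigmaInvariant_Rsub k H V)) n
      = evalMap k H V n := by
  induction n with
  | zero => rfl
  | succ n ih =>
      rw [coactPow_succ', ← star_eval k H V n, ← ih]
      show rTensor H (mapCore k H (V := ModuleCat.of k ↥(Rsub k H V)) (W := V)
          (evalMap k H V 0) n) ∘ₗ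
          rTensor H (coactPow k H (indRho k H (sigmaInvariant_Rsub k H V)) n) ∘ₗ
          indRho k H (sigmaInvariant_Rsub k H V) = _
      rw [← LinearMap.comp_assoc, ← rTensor_comp]

/-- The adjunction `pforget ⊣ R`. -/
def theAdj : pforget k H ⊣ Rfunctor k H where
  unit :=
    { app := fun A => ⟨etaMap k H A, (indRho_etaMap k H A).symm⟩
      naturality := fun A B f => by
        apply Subtype.ext
        apply LinearMap.ext
        intro a
        apply Subtype.ext
        funext n
        show coactPow k H B.ρ n (f.1 a)
          = mapCore k H (V := ModuleCat.of k A.carrier) (W := ModuleCat.of k B.carrier)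
              f.1 n (coactPow k H A.ρ n a)
        have := LinearMap.congr_fun (mapCore_coactPow k H (f := f.1) (ρ := A.ρ)
          (ρ' := B.ρ) f.2.symm n) a
        simpa only [LinearMap.comp_apply] using this }
  counit :=
    { app := fun V => ModuleCat.ofHom (evalMap k H V 0)
      naturality := fun V W φ => by
        apply ModuleCat.hom_ext
        apply LinearMap.ext
        intro x
        rfl }
  left_triangle_components := fun A => by
    apply ModuleCat.hom_ext
    apply LinearMap.ext
    intro a
    rfl
  right_triangle_components := fun V => by
    apply Subtype.ext
    apply LinearMap.ext
    intro x
    apply Subtype.ext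
    funext n
    show mapCore k H (V := ModuleCat.of k ↥(Rsub k H V)) (W := V) (evalMap k H V 0) n
        (coactPow k H (indRho k H (sigmaInvariant_Rsub k H V)) n x) = x.1 n
    have := LinearMap.congr_fun (key_eval k H V n) x
    exact this

end AuxAssemble
/-- The functor `R : Vect_k → PMod^H`, sending `V` to the largest partial
subcomodule `R(V)` of `(∏_{n ≥ 0} V ⊗ H^{⊗n}, σ)` and a linear map `φ` to the restriction of
`∏ₙ (φ ⊗ H^{⊗n})`, is right adjoint to the forgetful functor `U : PMod^H → Vect_k`; the unit
sends `m` to `(ρⁿ(m))ₙ` and the counit is the projection onto the degree-`0` component. -/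
theorem cofree_right_adjoint
    (k : Type u) [Field k] (H : Type u) [Ring H] [HopfAlgebra k H] :
    ∃ (R : ModuleCat.{u} k ⥤ PComod k H) (adj : pforget k H ⊣ R)
      (e : ∀ V : ModuleCat.{u} k, (R.obj V).carrier ≃ₗ[k] ↥(Rsub k H V)),
      (∀ V : ModuleCat.{u} k,
        (canMap k H V ∘ₗ
            LinearMap.rTensor H ((Rsub k H V).subtype ∘ₗ (e V).toLinearMap)) ∘ₗ
            (R.obj V).ρ =
          sigmaMap k H V ∘ₗ (Rsub k H V).subtype ∘ₗ (e V).toLinearMap) ∧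
      (∀ (V W : ModuleCat.{u} k) (φ : V ⟶ W) (r : (R.obj V).carrier),
        (Rsub k H W).subtype ((e W) ((R.map φ).1 r)) =
          ParProdMap k H φ.hom ((Rsub k H V).subtype ((e V) r))) ∧
      (∀ (A : PComod k H) (a : A.carrier) (n : ℕ),
        (Rsub k H ((pforget k H).obj A)).subtype
            ((e ((pforget k H).obj A)) ((adj.unit.app A).1 a)) n =
          coactPow k H A.ρ n a) ∧
      (∀ (V : ModuleCat.{u} k) (r : (R.obj V).carrier),
        adj.counit.app V r = ((Rsub k H V).subtype ((e V) r)) 0) := by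
  refine ⟨Rfunctor k H, theAdj k H, fun V => LinearEquiv.refl k _, ?_, ?_, ?_, ?_⟩
  · intro V
    show (canMap k H V ∘ₗ LinearMap.rTensor H ((Rsub k H V).subtype ∘ₗ LinearMap.id)) ∘ₗ
        indRho k H (sigmaInvariant_Rsub k H V)
      = sigmaMap k H V ∘ₗ (Rsub k H V).subtype ∘ₗ LinearMap.id
    rw [LinearMap.comp_id, ← jmap_indRho k H (sigmaInvariant_Rsub k H V)]
    rfl
  · intro V W φ r
    rfl
  · intro A a n
    rfl
  · intro V r
    rfl

end
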